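/- Let μ be a Lévy measure with μ(ℝ) = ∞ satisfying condition A with constant β > 1. Define ρ_t = inf{ξ > 0 : Re ψ(ξ) ≥ 1/t}, ρ_t^U = inf{ξ > 0 : ψ^U(ξ) ≥ 1/t}, ρ_t^L = inf{ξ > 0 : ψ^L(ξ) ≥ 1/t}. Then for every constant c ∈ (0,∞) there exist positive constants c₁, c₂ such that c₁ ρ_t ≤ ρ_{ct} ≤ c₂ ρ_t, c₁ ρ_t ≤ ρ_t^U ≤ c₂ ρ_t, and c₁ ρ_t ≤ ρ_t^L ≤ c₂ ρ_t for all t ∈ (0,1]. -/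

import Mathlib

open MeasureTheory Real Set

/-- A Lévy measure on `ℝ`: a Borel measure with `∫ min(1, u²) μ(du) < ∞`. -/
def IsLevyMeasure (μ : Measure ℝ) : Prop :=
  ∫⁻ u, ENNReal.ofReal (min 1 (u ^ 2)) ∂μ < ⊤

/-- `ψ^L(ξ) = ∫_{|ξu|<1} (ξu)² μ(du)`. -/
noncomputable def psiL (μ : Measure ℝ) (ξ : ℝ) : ℝ :=
  (∫⁻ u in {u : ℝ | |ξ * u| < 1}, ENNReal.ofReal ((ξ * u) ^ 2) ∂μ).toReal

/-- `ψ^U(ξ) = ∫ min((ξu)², 1) μ(du)`. -/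
noncomputable def psiU (μ : Measure ℝ) (ξ : ℝ) : ℝ :=
  (∫⁻ u, ENNReal.ofReal (min ((ξ * u) ^ 2) 1) ∂μ).toReal

/-- `Re ψ(ξ) = ∫ (1 - cos(ξu)) μ(du)`. -/
noncomputable def rePsi (μ : Measure ℝ) (ξ : ℝ) : ℝ :=
  (∫⁻ u, ENNReal.ofReal (1 - Real.cos (ξ * u)) ∂μ).toReal

/-- `ρ_t = inf{ξ > 0 : Re ψ(ξ) ≥ 1/t}`. -/
noncomputable def rho (μ : Measure ℝ) (t : ℝ) : ℝ :=
  sInf {ξ : ℝ | 0 < ξ ∧ 1 / t ≤ rePsi μ ξ}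

/-- `ρ_t^U = inf{ξ > 0 : ψ^U(ξ) ≥ 1/t}`. -/
noncomputable def rhoU (μ : Measure ℝ) (t : ℝ) : ℝ :=
  sInf {ξ : ℝ | 0 < ξ ∧ 1 / t ≤ psiU μ ξ}

/-- `ρ_t^L = inf{ξ > 0 : ψ^L(ξ) ≥ 1/t}`. -/
noncomputable def rhoL (μ : Measure ℝ) (t : ℝ) : ℝ :=
  sInf {ξ : ℝ | 0 < ξ ∧ 1 / t ≤ psiL μ ξ}

namespace RhoComparable

open ENNReal Filter

variable (μ : Measure ℝ)

/-- The `ℝ≥0∞`-valued version of `psiU`. -/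
noncomputable def PU (ξ : ℝ) : ℝ≥0∞ := ∫⁻ u, ENNReal.ofReal (min ((ξ * u) ^ 2) 1) ∂μ

/-- The `ℝ≥0∞`-valued version of `psiL`. -/
noncomputable def PL (ξ : ℝ) : ℝ≥0∞ :=
  ∫⁻ u in {u : ℝ | |ξ * u| < 1}, ENNReal.ofReal ((ξ * u) ^ 2) ∂μ

/-- The `ℝ≥0∞`-valued version of `rePsi`. -/
noncomputable def PR (ξ : ℝ) : ℝ≥0∞ := ∫⁻ u, ENNReal.ofReal (1 - Real.cos (ξ * u)) ∂μ

lemma psiU_eq (ξ : ℝ) : psiU μ ξ = (PU μ ξ).toReal := rfl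
lemma psiL_eq (ξ : ℝ) : psiL μ ξ = (PL μ ξ).toReal := rfl
lemma rePsi_eq (ξ : ℝ) : rePsi μ ξ = (PR μ ξ).toReal := rfl

lemma measU (ξ : ℝ) : Measurable fun u : ℝ => ENNReal.ofReal (min ((ξ * u) ^ 2) 1) :=
  (((measurable_const.mul measurable_id).pow_const 2).min measurable_const).ennreal_ofReal

lemma mS (ξ : ℝ) : MeasurableSet {u : ℝ | |ξ * u| < 1} :=
  measurableSet_lt (measurable_const.mul measurable_id).abs measurable_const

lemma PU_lt_top (hμ : IsLevyMeasure μ) (ξ : ℝ) : PU μ ξ < ⊤ := by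
  have hpt : ∀ u : ℝ, ENNReal.ofReal (min ((ξ * u) ^ 2) 1)
      ≤ ENNReal.ofReal (max (ξ ^ 2) 1) * ENNReal.ofReal (min 1 (u ^ 2)) := by
    intro u
    rw [← ENNReal.ofReal_mul (le_trans zero_le_one (le_max_right _ _))]
    apply ENNReal.ofReal_le_ofReal
    rcases le_total (u ^ 2) 1 with h | h
    · rw [min_eq_right h]
      calc min ((ξ * u) ^ 2) 1 ≤ (ξ * u) ^ 2 := min_le_left _ _
        _ = ξ ^ 2 * u ^ 2 := by ring
        _ ≤ max (ξ ^ 2) 1 * u ^ 2 :=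
          mul_le_mul_of_nonneg_right (le_max_left _ _) (sq_nonneg u)
    · rw [min_eq_left h]
      calc min ((ξ * u) ^ 2) 1 ≤ 1 := min_le_right _ _
        _ ≤ max (ξ ^ 2) 1 * 1 := by rw [mul_one]; exact le_max_right _ _
  calc PU μ ξ ≤ ∫⁻ u, ENNReal.ofReal (max (ξ ^ 2) 1) * ENNReal.ofReal (min 1 (u ^ 2)) ∂μ :=
        lintegral_mono hpt
    _ = ENNReal.ofReal (max (ξ ^ 2) 1) * ∫⁻ u, ENNReal.ofReal (min 1 (u ^ 2)) ∂μ :=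
        lintegral_const_mul' _ _ ENNReal.ofReal_ne_top
    _ < ⊤ := ENNReal.mul_lt_top ENNReal.ofReal_lt_top hμ

lemma PL_le_PU (ξ : ℝ) : PL μ ξ ≤ PU μ ξ := by
  refine le_trans (setLIntegral_mono' (mS ξ) fun u hu => ?_) (setLIntegral_le_lintegral _ _)
  apply ENNReal.ofReal_le_ofReal
  have h1 : (ξ * u) ^ 2 ≤ 1 := by
    have h : |ξ * u| < 1 := hu
    nlinarith [sq_abs (ξ * u), abs_nonneg (ξ * u)]
  exact le_min le_rfl h1

lemma PR_le (ξ : ℝ) : PR μ ξ ≤ ENNReal.ofReal 2 * PU μ ξ := by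
  rw [PU, ← lintegral_const_mul' _ _ ENNReal.ofReal_ne_top]
  refine lintegral_mono fun u => ?_
  rw [← ENNReal.ofReal_mul (by norm_num)]
  apply ENNReal.ofReal_le_ofReal
  rcases le_total ((ξ * u) ^ 2) 1 with h | h
  · rw [min_eq_left h]
    have := Real.one_sub_sq_div_two_le_cos (x := ξ * u)
    nlinarith [sq_nonneg (ξ * u)]
  · rw [min_eq_right h]
    have := Real.neg_one_le_cos (ξ * u)
    linarith

lemma PL_le_3PR (ξ : ℝ) : PL μ ξ ≤ ENNReal.ofReal 3 * PR μ ξ := by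
  rw [PR, ← lintegral_const_mul' _ _ ENNReal.ofReal_ne_top]
  refine le_trans (setLIntegral_mono' (mS ξ) fun u hu => ?_) (setLIntegral_le_lintegral _ _)
  rw [← ENNReal.ofReal_mul (by norm_num)]
  apply ENNReal.ofReal_le_ofReal
  have hx : |ξ * u| ≤ 1 := le_of_lt hu
  have hb := abs_le.mp (Real.cos_bound hx)
  have h4 : |ξ * u| ^ 4 = (ξ * u) ^ 2 * (ξ * u) ^ 2 := by
    rw [show (4 : ℕ) = 2 * 2 from rfl, pow_mul, sq_abs]; ring
  have hsq : (ξ * u) ^ 2 ≤ 1 := by nlinarith [sq_abs (ξ * u), abs_nonneg (ξ * u)]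
  nlinarith [hb.2, sq_nonneg (ξ * u)]

lemma PU_mono {ξ ξ' : ℝ} (h0 : 0 ≤ ξ) (h : ξ ≤ ξ') : PU μ ξ ≤ PU μ ξ' := by
  refine lintegral_mono fun u => ENNReal.ofReal_le_ofReal (min_le_min ?_ le_rfl)
  have hsq : ξ ^ 2 ≤ ξ' ^ 2 := by nlinarith
  calc (ξ * u) ^ 2 = ξ ^ 2 * u ^ 2 := by ring
    _ ≤ ξ' ^ 2 * u ^ 2 := mul_le_mul_of_nonneg_right hsq (sq_nonneg u)
    _ = (ξ' * u) ^ 2 := by ring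

lemma PU_rev (ξ : ℝ) :
    PU μ ξ + ENNReal.ofReal (3 / 4) * PL μ (2 * ξ) ≤ PU μ (2 * ξ) := by
  have hS : MeasurableSet {u : ℝ | |2 * ξ * u| < 1} := mS (2 * ξ)
  have h1 : ENNReal.ofReal (3 / 4) * PL μ (2 * ξ)
      = ∫⁻ u in {u : ℝ | |2 * ξ * u| < 1}, ENNReal.ofReal ((3 / 4) * (2 * ξ * u) ^ 2) ∂μ := by
    simp_rw [ENNReal.ofReal_mul (by norm_num : (0 : ℝ) ≤ 3 / 4)]
    exact (lintegral_const_mul' _ _ ENNReal.ofReal_ne_top).symm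
  rw [h1, ← lintegral_indicator hS, PU, PU, ← lintegral_add_left (measU ξ)]
  refine lintegral_mono fun u => ?_
  by_cases hu : u ∈ {u : ℝ | |2 * ξ * u| < 1}
  · rw [Set.indicator_of_mem hu, ← ENNReal.ofReal_add (le_min (sq_nonneg _) zero_le_one)
      (by positivity)]
    apply ENNReal.ofReal_le_ofReal
    have habs : |2 * ξ * u| < 1 := hu
    have hx : (2 * ξ * u) ^ 2 ≤ 1 := by
      nlinarith [sq_abs (2 * ξ * u), abs_nonneg (2 * ξ * u)]
    have hx' : (ξ * u) ^ 2 ≤ 1 := by nlinarith [sq_nonneg (ξ * u)]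
    rw [min_eq_left hx, min_eq_left hx']
    nlinarith [sq_nonneg (ξ * u)]
  · rw [Set.indicator_of_notMem hu, add_zero]
    apply ENNReal.ofReal_le_ofReal
    refine min_le_min ?_ le_rfl
    nlinarith [sq_nonneg (ξ * u)]

variable {μ}

lemma PL_lt_top (hμ : IsLevyMeasure μ) (ξ : ℝ) : PL μ ξ < ⊤ :=
  (PL_le_PU μ ξ).trans_lt (PU_lt_top μ hμ ξ)

lemma PR_lt_top (hμ : IsLevyMeasure μ) (ξ : ℝ) : PR μ ξ < ⊤ :=
  (PR_le μ ξ).trans_lt (ENNReal.mul_lt_top ENNReal.ofReal_lt_top (PU_lt_top μ hμ ξ))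

lemma psiL_le_psiU (hμ : IsLevyMeasure μ) (ξ : ℝ) : psiL μ ξ ≤ psiU μ ξ :=
  ENNReal.toReal_mono (PU_lt_top μ hμ ξ).ne (PL_le_PU μ ξ)

lemma rePsi_le (hμ : IsLevyMeasure μ) (ξ : ℝ) : rePsi μ ξ ≤ 2 * psiU μ ξ := by
  have h := ENNReal.toReal_mono
    (ENNReal.mul_ne_top ENNReal.ofReal_ne_top (PU_lt_top μ hμ ξ).ne) (PR_le μ ξ)
  rwa [ENNReal.toReal_mul, ENNReal.toReal_ofReal (by norm_num : (0:ℝ) ≤ 2)] at h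

lemma psiL_le_3rePsi (hμ : IsLevyMeasure μ) (ξ : ℝ) : psiL μ ξ ≤ 3 * rePsi μ ξ := by
  have h := ENNReal.toReal_mono
    (ENNReal.mul_ne_top ENNReal.ofReal_ne_top (PR_lt_top hμ ξ).ne) (PL_le_3PR μ ξ)
  rwa [ENNReal.toReal_mul, ENNReal.toReal_ofReal (by norm_num : (0:ℝ) ≤ 3)] at h

lemma psiU_mono (hμ : IsLevyMeasure μ) {ξ ξ' : ℝ} (h0 : 0 ≤ ξ) (h : ξ ≤ ξ') :
    psiU μ ξ ≤ psiU μ ξ' :=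
  ENNReal.toReal_mono (PU_lt_top μ hμ ξ').ne (PU_mono μ h0 h)

lemma psiU_nonneg (ξ : ℝ) : 0 ≤ psiU μ ξ := ENNReal.toReal_nonneg

lemma psiU_rev (hμ : IsLevyMeasure μ) (ξ : ℝ) :
    psiU μ ξ + (3 / 4) * psiL μ (2 * ξ) ≤ psiU μ (2 * ξ) := by
  have h := ENNReal.toReal_mono (PU_lt_top μ hμ (2 * ξ)).ne (PU_rev μ ξ)
  rwa [ENNReal.toReal_add (PU_lt_top μ hμ ξ).ne
      (ENNReal.mul_ne_top ENNReal.ofReal_ne_top (PL_lt_top hμ (2 * ξ)).ne),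
    ENNReal.toReal_mul, ENNReal.toReal_ofReal (by norm_num : (0:ℝ) ≤ 3/4)] at h

lemma psiU_revdouble (hμ : IsLevyMeasure μ) {β : ℝ} (hβ : 1 < β)
    (hA : ∀ ξ : ℝ, psiU μ ξ ≤ β * psiL μ ξ) {ξ : ℝ} (h0 : 0 ≤ ξ) :
    (1 + 3 / (4 * β)) * psiU μ ξ ≤ psiU μ (2 * ξ) := by
  have hb : (0:ℝ) < β := by linarith
  have h1 := psiU_rev hμ ξ
  have h2 := hA (2 * ξ)
  have h3 := psiU_mono hμ h0 (by linarith : ξ ≤ 2 * ξ)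
  have h4β : (0:ℝ) < 4 * β := by linarith
  rw [← mul_le_mul_iff_right₀ h4β]
  have he : 4 * β * ((1 + 3 / (4 * β)) * psiU μ ξ)
      = 4 * β * psiU μ ξ + 3 * psiU μ ξ := by field_simp
  rw [he]
  have h5 := mul_le_mul_of_nonneg_left h1 hb.le
  nlinarith [h5, h2, h3]

/-- The key quasi-inverse comparison lemma. -/
lemma key (g f₁ f₂ : ℝ → ℝ) (γ : ℝ) (hγ : 0 ≤ γ)
    (hrev : ∀ ξ : ℝ, 0 < ξ → γ * g ξ ≤ g (2 * ξ))
    (s₁ s₂ c' s₂' : ℝ)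
    (h1 : ∀ ξ : ℝ, 0 < ξ → s₁ ≤ f₁ ξ → c' ≤ g ξ)
    (h2 : ∀ ξ : ℝ, 0 < ξ → s₂' ≤ g ξ → s₂ ≤ f₂ ξ)
    (k : ℕ) (hk : s₂' ≤ γ ^ k * c')
    (hne : {ξ : ℝ | 0 < ξ ∧ s₁ ≤ f₁ ξ}.Nonempty) :
    sInf {ξ : ℝ | 0 < ξ ∧ s₂ ≤ f₂ ξ} ≤ 2 ^ k * sInf {ξ : ℝ | 0 < ξ ∧ s₁ ≤ f₁ ξ} := by
  have h2k : (0:ℝ) < 2 ^ k := by positivity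
  have hstep : ∀ ξ ∈ {ξ : ℝ | 0 < ξ ∧ s₁ ≤ f₁ ξ},
      sInf {ξ : ℝ | 0 < ξ ∧ s₂ ≤ f₂ ξ} ≤ 2 ^ k * ξ := by
    intro ξ hξ
    obtain ⟨hξ0, hξ1⟩ := hξ
    have iter : ∀ j : ℕ, γ ^ j * g ξ ≤ g (2 ^ j * ξ) := by
      intro j
      induction j with
      | zero => simp
      | succ n ih =>
        have hp : (0:ℝ) < 2 ^ n * ξ := by positivity
        calc γ ^ (n + 1) * g ξ = γ * (γ ^ n * g ξ) := by ring
          _ ≤ γ * g (2 ^ n * ξ) := mul_le_mul_of_nonneg_left ih hγ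
          _ ≤ g (2 * (2 ^ n * ξ)) := hrev _ hp
          _ = g (2 ^ (n + 1) * ξ) := by
              rw [show (2:ℝ) * (2 ^ n * ξ) = 2 ^ (n + 1) * ξ by ring]
    have hgξ : c' ≤ g ξ := h1 ξ hξ0 hξ1
    have hmem : 2 ^ k * ξ ∈ {ξ : ℝ | 0 < ξ ∧ s₂ ≤ f₂ ξ} := by
      refine ⟨by positivity, h2 _ (by positivity) ?_⟩
      calc s₂' ≤ γ ^ k * c' := hk
        _ ≤ γ ^ k * g ξ := mul_le_mul_of_nonneg_left hgξ (by positivity)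
        _ ≤ g (2 ^ k * ξ) := iter k
    exact csInf_le ⟨0, fun x hx => hx.1.le⟩ hmem
  have hfin : sInf {ξ : ℝ | 0 < ξ ∧ s₂ ≤ f₂ ξ} / 2 ^ k
      ≤ sInf {ξ : ℝ | 0 < ξ ∧ s₁ ≤ f₁ ξ} :=
    le_csInf hne fun ξ hξ => (div_le_iff₀ h2k).mpr (by rw [mul_comm]; exact hstep ξ hξ)
  rw [div_le_iff₀ h2k] at hfin
  linarith

lemma sInf_zero_of {f : ℝ → ℝ} (h0 : ∀ ξ : ℝ, 0 < ξ → f ξ = 0) {s : ℝ} (hs : 0 < s) :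
    sInf {ξ : ℝ | 0 < ξ ∧ s ≤ f ξ} = 0 := by
  convert Real.sInf_empty
  rw [Set.eq_empty_iff_forall_notMem]
  rintro ξ ⟨hξ1, hξ2⟩
  rw [h0 ξ hξ1] at hξ2
  linarith

/-- Either `psiU` is unbounded on the positives, or all the `ℝ≥0∞`-integrals vanish. -/
lemma dichotomy (hμ : IsLevyMeasure μ) {β : ℝ} (hβ : 1 < β)
    (hA : ∀ ξ : ℝ, psiU μ ξ ≤ β * psiL μ ξ) :
    (∀ s : ℝ, ∃ ξ : ℝ, 0 < ξ ∧ s ≤ psiU μ ξ) ∨ (∀ ξ : ℝ, 0 < ξ → PU μ ξ = 0) := by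
  by_cases hL : (⨆ n : ℕ, PU μ (n : ℝ)) = ⊤
  · left
    intro s
    rcases le_or_gt s 0 with hs | hs
    · exact ⟨1, one_pos, hs.trans (psiU_nonneg 1)⟩
    · have hlt : ENNReal.ofReal s < ⨆ n : ℕ, PU μ (n : ℝ) := hL ▸ ENNReal.ofReal_lt_top
      obtain ⟨n, hn⟩ := lt_iSup_iff.mp hlt
      refine ⟨(n : ℝ) + 1, by positivity, ?_⟩
      have h1 : s ≤ psiU μ (n : ℝ) := by
        rw [psiU_eq]
        exact (ENNReal.ofReal_le_iff_le_toReal (PU_lt_top μ hμ _).ne).mp hn.le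
      exact h1.trans (psiU_mono hμ (Nat.cast_nonneg n) (by linarith))
  · rcases eq_or_ne (⨆ n : ℕ, PU μ (n : ℝ)) 0 with hL0 | hLpos
    · right
      intro ξ hξ
      have h1 : PU μ ξ ≤ PU μ ((⌈ξ⌉₊ : ℕ) : ℝ) := PU_mono μ hξ.le (Nat.le_ceil ξ)
      have h2 : PU μ ((⌈ξ⌉₊ : ℕ) : ℝ) ≤ ⨆ n : ℕ, PU μ (n : ℝ) :=
        le_iSup (fun n : ℕ => PU μ (n : ℝ)) ⌈ξ⌉₊
      exact le_antisymm (h1.trans (h2.trans_eq hL0)) zero_le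
    · exfalso
      set L := ⨆ n : ℕ, PU μ (n : ℝ) with hLdef
      -- the measure of {|u| ≥ 1/(n+1)} is at most PU μ (n+1)
      have hμA : ∀ n : ℕ, μ {u : ℝ | 1 / ((n : ℝ) + 1) ≤ |u|} ≤ PU μ ((n : ℝ) + 1) := by
        intro n
        have hm : MeasurableSet {u : ℝ | 1 / ((n : ℝ) + 1) ≤ |u|} :=
          measurableSet_le measurable_const measurable_id.abs
        rw [← lintegral_indicator_one hm, PU]
        refine lintegral_mono fun u => ?_
        by_cases hu : u ∈ {u : ℝ | 1 / ((n : ℝ) + 1) ≤ |u|}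
        · rw [Set.indicator_of_mem hu]
          refine ENNReal.one_le_ofReal.mpr (le_min ?_ le_rfl)
          have ha : (0:ℝ) < (n : ℝ) + 1 := by positivity
          have hu' : 1 / ((n : ℝ) + 1) ≤ |u| := hu
          have h1 : 1 ≤ |((n : ℝ) + 1) * u| := by
            rw [abs_mul, abs_of_pos ha]
            rw [div_le_iff₀ ha] at hu'
            nlinarith
          nlinarith [sq_abs (((n : ℝ) + 1) * u), abs_nonneg (((n : ℝ) + 1) * u)]
        · rw [Set.indicator_of_notMem hu]; exact zero_le
      -- the integral PL μ (n+1) is at most the measure of {u ≠ 0, |u| < 1/(n+1)}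
      set B : ℕ → Set ℝ := fun n => {u : ℝ | u ≠ 0 ∧ |u| < 1 / ((n : ℝ) + 1)} with hBdef
      have hmB : ∀ n : ℕ, MeasurableSet (B n) := by
        intro n
        exact (measurableSet_singleton (0:ℝ)).compl.inter
          (measurableSet_lt measurable_id.abs measurable_const)
      have hμB : ∀ n : ℕ, PL μ ((n : ℝ) + 1) ≤ μ (B n) := by
        intro n
        have ha : (0:ℝ) < (n : ℝ) + 1 := by positivity
        calc PL μ ((n : ℝ) + 1)
            ≤ ∫⁻ u in {u : ℝ | |((n : ℝ) + 1) * u| < 1},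
                Set.indicator (B n) (1 : ℝ → ℝ≥0∞) u ∂μ := by
              refine setLIntegral_mono' (mS _) fun u hu => ?_
              have hu' : |((n : ℝ) + 1) * u| < 1 := hu
              by_cases h0 : u = 0
              · subst h0; simp
              · have hmem : u ∈ B n := by
                  refine ⟨h0, ?_⟩
                  rw [abs_mul, abs_of_pos ha] at hu'
                  rw [lt_div_iff₀ ha]
                  nlinarith
                rw [Set.indicator_of_mem hmem]
                refine ENNReal.ofReal_le_one.mpr ?_
                nlinarith [sq_abs (((n : ℝ) + 1) * u), abs_nonneg (((n : ℝ) + 1) * u)]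
          _ ≤ ∫⁻ u, Set.indicator (B n) (1 : ℝ → ℝ≥0∞) u ∂μ :=
              setLIntegral_le_lintegral _ _
          _ = μ (B n) := lintegral_indicator_one (hmB n)
      -- B 0 has finite measure
      have hAn : ∀ n : ℕ, μ {u : ℝ | 1 / ((n : ℝ) + 1) ≤ |u|} ≤ L := by
        intro n
        refine (hμA n).trans ?_
        have h := le_iSup (fun m : ℕ => PU μ (m : ℝ)) (n + 1)
        rw [hLdef]
        convert h using 2
        push_cast
        ring
      have hBfin : μ (B 0) ≠ ⊤ := by
        have hcover : B 0 = ⋃ n : ℕ, B 0 ∩ {u : ℝ | 1 / ((n : ℝ) + 1) ≤ |u|} := by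
          ext u
          simp only [Set.mem_iUnion, Set.mem_inter_iff]
          constructor
          · intro hu
            have h0 : 0 < |u| := abs_pos.mpr hu.1
            obtain ⟨n, hn⟩ := exists_nat_gt (1 / |u|)
            refine ⟨n, hu, ?_⟩
            have h1 : 1 / |u| < (n : ℝ) + 1 := by linarith
            calc 1 / ((n : ℝ) + 1) ≤ 1 / (1 / |u|) :=
                  one_div_le_one_div_of_le (by positivity) h1.le
              _ = |u| := one_div_one_div _
          · rintro ⟨n, h, _⟩; exact h
        have hmono : Monotone fun n : ℕ => B 0 ∩ {u : ℝ | 1 / ((n : ℝ) + 1) ≤ |u|} := by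
          intro m n hmn
          refine Set.inter_subset_inter_right _ fun u hu => ?_
          have hu' : 1 / ((m : ℝ) + 1) ≤ |u| := hu
          refine le_trans ?_ hu'
          apply one_div_le_one_div_of_le (by positivity)
          have : (m : ℝ) ≤ (n : ℝ) := Nat.cast_le.mpr hmn
          linarith
        rw [hcover, hmono.measure_iUnion]
        refine ne_top_of_le_ne_top hL (iSup_le fun n => ?_)
        exact (measure_mono Set.inter_subset_right).trans (hAn n)
      -- B n decreases to ∅
      have hanti : Antitone B := by
        intro m n hmn u hu
        refine ⟨hu.1, lt_of_lt_of_le hu.2 ?_⟩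
        apply one_div_le_one_div_of_le (by positivity)
        have : (m : ℝ) ≤ (n : ℝ) := Nat.cast_le.mpr hmn
        linarith
      have hiInter : ⋂ n, B n = ∅ := by
        rw [Set.eq_empty_iff_forall_notMem]
        intro u hu
        rw [Set.mem_iInter] at hu
        have h0 : 0 < |u| := abs_pos.mpr (hu 0).1
        obtain ⟨n, hn⟩ := exists_nat_gt (1 / |u|)
        have h1 : 1 / ((n : ℝ) + 1) ≤ |u| := by
          calc 1 / ((n : ℝ) + 1) ≤ 1 / (1 / |u|) :=
                one_div_le_one_div_of_le (by positivity) (by linarith)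
            _ = |u| := one_div_one_div _
        exact absurd (hu n).2 (not_lt.mpr h1)
      have hInf : (⨅ n, μ (B n)) = 0 := by
        rw [← hanti.measure_iInter (fun n => (hmB n).nullMeasurableSet) ⟨0, hBfin⟩,
          hiInter, measure_empty]
      -- extract the contradiction
      have hL2 : L / 2 < L := ENNReal.half_lt_self hLpos hL
      obtain ⟨n₀, hn₀⟩ := lt_iSup_iff.mp (show L / 2 < ⨆ n : ℕ, PU μ (n : ℝ) from hL2)
      have hε : (0 : ℝ≥0∞) < L / 2 / ENNReal.ofReal β :=
        ENNReal.div_pos (ENNReal.half_pos hLpos).ne' ENNReal.ofReal_ne_top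
      obtain ⟨n₁, hn₁⟩ : ∃ n, μ (B n) < L / 2 / ENNReal.ofReal β := by
        by_contra h
        push_neg at h
        have h2 : L / 2 / ENNReal.ofReal β ≤ ⨅ n, μ (B n) := le_iInf h
        rw [hInf] at h2
        exact hε.ne' (le_antisymm h2 zero_le)
      set N := max n₀ n₁ with hNdef
      have hge : L / 2 < PU μ ((N : ℝ) + 1) := by
        refine hn₀.trans_le (PU_mono μ (Nat.cast_nonneg n₀) ?_)
        have : (n₀ : ℝ) ≤ (N : ℝ) := Nat.cast_le.mpr (le_max_left n₀ n₁)
        linarith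
      have hAE : PU μ ((N : ℝ) + 1) ≤ ENNReal.ofReal β * PL μ ((N : ℝ) + 1) := by
        have h1 := hA ((N : ℝ) + 1)
        have h2 : PU μ ((N : ℝ) + 1) = ENNReal.ofReal (psiU μ ((N : ℝ) + 1)) :=
          (ENNReal.ofReal_toReal (PU_lt_top μ hμ _).ne).symm
        have h3 : PL μ ((N : ℝ) + 1) = ENNReal.ofReal (psiL μ ((N : ℝ) + 1)) :=
          (ENNReal.ofReal_toReal (PL_lt_top hμ _).ne).symm
        rw [h2, h3, ← ENNReal.ofReal_mul (by linarith : (0:ℝ) ≤ β)]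
        exact ENNReal.ofReal_le_ofReal h1
      have h5 : μ (B N) < L / 2 / ENNReal.ofReal β :=
        lt_of_le_of_lt (measure_mono (hanti (le_max_right n₀ n₁))) hn₁
      have h6 : PU μ ((N : ℝ) + 1) ≤ L / 2 :=
        hAE.trans ((mul_le_mul_right ((hμB N).trans h5.le) _).trans ENNReal.mul_div_le)
      exact absurd h6 (not_le.mpr hge)

end RhoComparable

/-- Lemma 3.3: the quasi-inverses `ρ_{ct}`, `ρ_t^U`, `ρ_t^L` are all comparable to `ρ_t`,
uniformly in `t ∈ (0,1]`. -/
theorem rho_comparable (μ : Measure ℝ) (hμ : IsLevyMeasure μ)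
    (hinf : μ Set.univ = ⊤) (β : ℝ) (hβ : 1 < β)
    (hA : ∀ ξ : ℝ, psiU μ ξ ≤ β * psiL μ ξ) :
    ∀ c : ℝ, 0 < c → ∃ c₁ > (0 : ℝ), ∃ c₂ > (0 : ℝ), ∀ t ∈ Set.Ioc (0 : ℝ) 1,
      (c₁ * rho μ t ≤ rho μ (c * t) ∧ rho μ (c * t) ≤ c₂ * rho μ t) ∧
      (c₁ * rho μ t ≤ rhoU μ t ∧ rhoU μ t ≤ c₂ * rho μ t) ∧
      (c₁ * rho μ t ≤ rhoL μ t ∧ rhoL μ t ≤ c₂ * rho μ t) := by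
  classical
  intro c hc
  have hβ0 : (0:ℝ) < β := by linarith
  rcases RhoComparable.dichotomy hμ hβ hA with hsup | h0
  · -- main case: psiU is unbounded
    set γ : ℝ := 1 + 3 / (4 * β) with hγdef
    have hγ1 : 1 < γ := by
      have h : (0:ℝ) < 3 / (4 * β) := by positivity
      rw [hγdef]; linarith
    have hγ0 : (0:ℝ) ≤ γ := by linarith
    have hrev : ∀ ξ : ℝ, 0 < ξ → γ * psiU μ ξ ≤ psiU μ (2 * ξ) := fun ξ hξ =>
      RhoComparable.psiU_revdouble hμ hβ hA hξ.le
    obtain ⟨k, hk⟩ := pow_unbounded_of_one_lt (6 * β * (c + 1 / c + 1)) hγ1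
    have hc1 : (0:ℝ) < 1 / c := by positivity
    -- the individual bounds on γ ^ k
    have hbi : 6 * β * (1 / c) ≤ γ ^ k := by nlinarith [mul_pos hβ0 hc]
    have hbii : 6 * β * c ≤ γ ^ k := by nlinarith [mul_pos hβ0 hc1]
    have hbiii : (2:ℝ) ≤ γ ^ k := by nlinarith [mul_pos hβ0 hc, mul_pos hβ0 hc1]
    have hbiv : 3 * β ≤ γ ^ k := by nlinarith [mul_pos hβ0 hc, mul_pos hβ0 hc1]
    have hbv : 2 * β ≤ γ ^ k := by nlinarith [mul_pos hβ0 hc, mul_pos hβ0 hc1]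
    -- comparison inequalities between the three functions
    have hRleU : ∀ ξ : ℝ, rePsi μ ξ ≤ 2 * psiU μ ξ := RhoComparable.rePsi_le hμ
    have hLleU : ∀ ξ : ℝ, psiL μ ξ ≤ psiU μ ξ := RhoComparable.psiL_le_psiU hμ
    have hUleR : ∀ ξ : ℝ, psiU μ ξ ≤ 3 * β * rePsi μ ξ := by
      intro ξ
      have h1 := hA ξ
      have h2 := RhoComparable.psiL_le_3rePsi hμ ξ
      nlinarith [mul_le_mul_of_nonneg_left h2 hβ0.le]
    -- set membership transfer implications
    have h1R : ∀ s ξ : ℝ, 0 < ξ → s ≤ rePsi μ ξ → s / 2 ≤ psiU μ ξ := by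
      intro s ξ _ h; have := hRleU ξ; linarith
    have h1U : ∀ s ξ : ℝ, 0 < ξ → s ≤ psiU μ ξ → s ≤ psiU μ ξ := fun _ _ _ h => h
    have h1L : ∀ s ξ : ℝ, 0 < ξ → s ≤ psiL μ ξ → s ≤ psiU μ ξ := fun s ξ _ h =>
      h.trans (hLleU ξ)
    have h2R : ∀ s ξ : ℝ, 0 < ξ → 3 * β * s ≤ psiU μ ξ → s ≤ rePsi μ ξ := by
      intro s ξ _ h
      exact le_of_mul_le_mul_left (h.trans (hUleR ξ)) (by positivity)
    have h2L : ∀ s ξ : ℝ, 0 < ξ → β * s ≤ psiU μ ξ → s ≤ psiL μ ξ := by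
      intro s ξ _ h
      exact le_of_mul_le_mul_left (h.trans (hA ξ)) hβ0
    -- nonemptiness of the level sets
    have hneU : ∀ s : ℝ, {ξ : ℝ | 0 < ξ ∧ s ≤ psiU μ ξ}.Nonempty := by
      intro s; obtain ⟨ξ, hξ1, hξ2⟩ := hsup s; exact ⟨ξ, hξ1, hξ2⟩
    have hneR : ∀ s : ℝ, {ξ : ℝ | 0 < ξ ∧ s ≤ rePsi μ ξ}.Nonempty := by
      intro s
      obtain ⟨ξ, hξ1, hξ2⟩ := hsup (3 * β * s)
      exact ⟨ξ, hξ1, le_of_mul_le_mul_left (hξ2.trans (hUleR ξ)) (by positivity)⟩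
    have hneL : ∀ s : ℝ, {ξ : ℝ | 0 < ξ ∧ s ≤ psiL μ ξ}.Nonempty := by
      intro s
      obtain ⟨ξ, hξ1, hξ2⟩ := hsup (β * s)
      exact ⟨ξ, hξ1, le_of_mul_le_mul_left (hξ2.trans (hA ξ)) hβ0⟩
    refine ⟨((2:ℝ) ^ k)⁻¹, by positivity, (2:ℝ) ^ k, by positivity, fun t ht => ?_⟩
    obtain ⟨ht0, ht1⟩ := ht
    have htne : t ≠ 0 := ht0.ne'
    have hcne : c ≠ 0 := hc.ne'
    have hs : (0:ℝ) < 1 / t := by positivity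
    have hsc : (0:ℝ) < 1 / (c * t) := by positivity
    -- the six instances of the key lemma
    have Hi : sInf {ξ : ℝ | 0 < ξ ∧ 1 / (c * t) ≤ rePsi μ ξ}
        ≤ 2 ^ k * sInf {ξ : ℝ | 0 < ξ ∧ 1 / t ≤ rePsi μ ξ} := by
      refine RhoComparable.key (psiU μ) (rePsi μ) (rePsi μ) γ hγ0 hrev
        (1 / t) (1 / (c * t)) ((1 / t) / 2) (3 * β * (1 / (c * t)))
        (h1R (1 / t)) (h2R (1 / (c * t))) k ?_ (hneR (1 / t))
      have e1 : 3 * β * (1 / (c * t)) = (6 * β * (1 / c)) * ((1 / t) / 2) := by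
        field_simp; ring
      rw [e1]
      exact mul_le_mul_of_nonneg_right hbi (by positivity)
    have Hii : sInf {ξ : ℝ | 0 < ξ ∧ 1 / t ≤ rePsi μ ξ}
        ≤ 2 ^ k * sInf {ξ : ℝ | 0 < ξ ∧ 1 / (c * t) ≤ rePsi μ ξ} := by
      refine RhoComparable.key (psiU μ) (rePsi μ) (rePsi μ) γ hγ0 hrev
        (1 / (c * t)) (1 / t) ((1 / (c * t)) / 2) (3 * β * (1 / t))
        (h1R (1 / (c * t))) (h2R (1 / t)) k ?_ (hneR (1 / (c * t)))
      have e1 : 3 * β * (1 / t) = (6 * β * c) * ((1 / (c * t)) / 2) := by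
        field_simp; ring
      rw [e1]
      exact mul_le_mul_of_nonneg_right hbii (by positivity)
    have Hiii : sInf {ξ : ℝ | 0 < ξ ∧ 1 / t ≤ psiU μ ξ}
        ≤ 2 ^ k * sInf {ξ : ℝ | 0 < ξ ∧ 1 / t ≤ rePsi μ ξ} := by
      refine RhoComparable.key (psiU μ) (rePsi μ) (psiU μ) γ hγ0 hrev
        (1 / t) (1 / t) ((1 / t) / 2) (1 / t)
        (h1R (1 / t)) (h1U (1 / t)) k ?_ (hneR (1 / t))
      calc 1 / t = (2:ℝ) * ((1 / t) / 2) := by ring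
        _ ≤ γ ^ k * ((1 / t) / 2) := mul_le_mul_of_nonneg_right hbiii (by positivity)
    have Hiv : sInf {ξ : ℝ | 0 < ξ ∧ 1 / t ≤ rePsi μ ξ}
        ≤ 2 ^ k * sInf {ξ : ℝ | 0 < ξ ∧ 1 / t ≤ psiU μ ξ} := by
      refine RhoComparable.key (psiU μ) (psiU μ) (rePsi μ) γ hγ0 hrev
        (1 / t) (1 / t) (1 / t) (3 * β * (1 / t))
        (h1U (1 / t)) (h2R (1 / t)) k ?_ (hneU (1 / t))
      exact mul_le_mul_of_nonneg_right hbiv (by positivity)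
    have Hv : sInf {ξ : ℝ | 0 < ξ ∧ 1 / t ≤ psiL μ ξ}
        ≤ 2 ^ k * sInf {ξ : ℝ | 0 < ξ ∧ 1 / t ≤ rePsi μ ξ} := by
      refine RhoComparable.key (psiU μ) (rePsi μ) (psiL μ) γ hγ0 hrev
        (1 / t) (1 / t) ((1 / t) / 2) (β * (1 / t))
        (h1R (1 / t)) (h2L (1 / t)) k ?_ (hneR (1 / t))
      have e1 : β * (1 / t) = (2 * β) * ((1 / t) / 2) := by ring
      rw [e1]
      exact mul_le_mul_of_nonneg_right hbv (by positivity)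
    have Hvi : sInf {ξ : ℝ | 0 < ξ ∧ 1 / t ≤ rePsi μ ξ}
        ≤ 2 ^ k * sInf {ξ : ℝ | 0 < ξ ∧ 1 / t ≤ psiL μ ξ} := by
      refine RhoComparable.key (psiU μ) (psiL μ) (rePsi μ) γ hγ0 hrev
        (1 / t) (1 / t) (1 / t) (3 * β * (1 / t))
        (h1L (1 / t)) (h2R (1 / t)) k ?_ (hneL (1 / t))
      exact mul_le_mul_of_nonneg_right hbiv (by positivity)
    have h2kpos : (0:ℝ) < 2 ^ k := by positivity
    refine ⟨⟨?_, ?_⟩, ⟨?_, ?_⟩, ⟨?_, ?_⟩⟩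
    · rw [inv_mul_le_iff₀ h2kpos]; exact Hii
    · exact Hi
    · rw [inv_mul_le_iff₀ h2kpos]; exact Hiv
    · exact Hiii
    · rw [inv_mul_le_iff₀ h2kpos]; exact Hvi
    · exact Hv
  · -- degenerate case: everything vanishes
    have hU0 : ∀ ξ : ℝ, 0 < ξ → psiU μ ξ = 0 := by
      intro ξ hξ
      rw [RhoComparable.psiU_eq, h0 ξ hξ, ENNReal.toReal_zero]
    have hL0 : ∀ ξ : ℝ, 0 < ξ → psiL μ ξ = 0 := by
      intro ξ hξ
      have h := (RhoComparable.PL_le_PU μ ξ).trans_eq (h0 ξ hξ)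
      rw [RhoComparable.psiL_eq, le_zero_iff.mp h, ENNReal.toReal_zero]
    have hR0 : ∀ ξ : ℝ, 0 < ξ → rePsi μ ξ = 0 := by
      intro ξ hξ
      have h := RhoComparable.PR_le μ ξ
      rw [h0 ξ hξ, mul_zero] at h
      rw [RhoComparable.rePsi_eq, le_zero_iff.mp h, ENNReal.toReal_zero]
    refine ⟨1, one_pos, 1, one_pos, fun t ht => ?_⟩
    obtain ⟨ht0, ht1⟩ := ht
    have h1 : rho μ t = 0 := RhoComparable.sInf_zero_of hR0 (one_div_pos.mpr ht0)
    have h2 : rho μ (c * t) = 0 :=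
      RhoComparable.sInf_zero_of hR0 (one_div_pos.mpr (by positivity))
    have h3 : rhoU μ t = 0 := RhoComparable.sInf_zero_of hU0 (one_div_pos.mpr ht0)
    have h4 : rhoL μ t = 0 := RhoComparable.sInf_zero_of hL0 (one_div_pos.mpr ht0)
    rw [h1, h2, h3, h4]
    norm_num
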